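/- Dynamics in the attractive petal at infinity: Let m ≥ 1 be an integer, μ ∈ ℂ with |μ| < 1, r > 0, R₁ > 0, and K₁, K₂ ≥ 0 constants with √2·K₁/R₁ < 1/2 and 2^{1/(2m)}·K₂/R₁^{1/m} < (1 − |μ|)·r. Let U = {X ∈ ℂ : R₁ − Re(X) < |Im(X)|} and W = U × {Y ∈ ℂ : |Y| < r}, and let F = (F₁, F₂) : W → ℂ² satisfy |F₁(X, Y) − X − 1| ≤ K₁/|X| and |F₂(X, Y) − μY| ≤ K₂/|X|^{1/m} for all (X, Y) ∈ W. Then: (i) every X ∈ U satisfies |X| > R₁/√2; (ii) F(W) ⊆ W; (iii) for every (X₀, Y₀) ∈ W, the orbit (X_n, Y_n) = F^{∘n}(X₀, Y₀) satisfies Re(X_n) ≥ Re(X₀) + n/2 for all n ≥ 0 (in particular |X_n| → ∞), and Y_n → 0 as n → ∞. -/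

import Mathlib

open Metric Filter Topology Set

noncomputable section

/-- Auxiliary: a nonnegative sequence satisfying `u (n+1) ≤ a * u n + e n` with `a < 1`
and `e → 0` tends to `0`. -/
lemma petal_aux_tendsto (a : ℝ) (ha0 : 0 ≤ a) (ha1 : a < 1) (u e : ℕ → ℝ)
    (hu : ∀ n, 0 ≤ u n) (hrec : ∀ n, u (n + 1) ≤ a * u n + e n)
    (he : Filter.Tendsto e Filter.atTop (nhds 0)) :
    Filter.Tendsto u Filter.atTop (nhds 0) := by
  rw [Metric.tendsto_atTop] at he ⊢
  intro ε hε
  obtain ⟨M, hM⟩ := he ((1 - a) * ε / 2) (by nlinarith)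
  have hkey : ∀ k, u (M + k) ≤ a ^ k * u M + ε / 2 := by
    intro k
    induction k with
    | zero => simp; linarith [hε]
    | succ k ih =>
      have h1 := hrec (M + k)
      have h2 := hM (M + k) (Nat.le_add_right _ _)
      rw [Real.dist_eq, sub_zero] at h2
      have h2' : e (M + k) < (1 - a) * ε / 2 := (le_abs_self _).trans_lt h2
      have h3 : a * u (M + k) ≤ a * (a ^ k * u M + ε / 2) :=
        mul_le_mul_of_nonneg_left ih ha0
      have h4 : M + (k + 1) = (M + k) + 1 := by omega
      rw [h4]
      have h5 : a * (ε / 2) ≤ ε / 2 := by nlinarith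
      calc u ((M + k) + 1) ≤ a * u (M + k) + e (M + k) := h1
        _ ≤ a * (a ^ k * u M + ε / 2) + (1 - a) * ε / 2 := by linarith
        _ = a ^ (k + 1) * u M + (a * (ε/2) + (1 - a) * ε / 2) := by ring
        _ ≤ a ^ (k + 1) * u M + ε / 2 := by linarith
  have hpow : Filter.Tendsto (fun k => a ^ k * u M) Filter.atTop (nhds 0) := by
    simpa using (tendsto_pow_atTop_nhds_zero_of_lt_one ha0 ha1).mul_const (u M)
  obtain ⟨K, hK⟩ := (Metric.tendsto_atTop.mp hpow) (ε / 2) (by linarith)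
  refine ⟨M + K, fun n hn => ?_⟩
  obtain ⟨k, rfl⟩ : ∃ k, n = M + k := ⟨n - M, by omega⟩
  have hk : K ≤ k := by omega
  have h6 := hK k hk
  rw [Real.dist_eq, sub_zero] at h6
  have h7 : a ^ k * u M ≤ |a ^ k * u M| := le_abs_self _
  rw [Real.dist_eq, sub_zero]
  rw [abs_of_nonneg (hu _)]
  have := hkey k
  linarith

/-- The region `U = {X ∈ ℂ : R₁ − Re X < |Im X|}` near infinity. -/
def petalU (R₁ : ℝ) : Set ℂ := {X | R₁ - X.re < |X.im|}

/-- The region `W = U × D_r`. -/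
def petalW (R₁ r : ℝ) : Set (ℂ × ℂ) := petalU R₁ ×ˢ Metric.ball (0 : ℂ) r

/-- **Dynamics in the attractive petal at infinity.** If `F(X,Y) = (X + 1 + O(1/|X|),
μY + O(1/|X|^{1/m}))` on `W = U × D_r` with the stated bounds, then every `X ∈ U` satisfies
`|X| > R₁/√2`, `F` maps `W` into itself, and along every orbit in `W` the real parts of the
first coordinates grow at least linearly (so `|X_n| → ∞`) while the second coordinates tend
to `0`. -/
theorem petal_dynamics (m : ℕ) (hm : 1 ≤ m) (mu : ℂ) (hmu : ‖mu‖ < 1)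
    (r R₁ K₁ K₂ : ℝ) (hr : 0 < r) (hR₁ : 0 < R₁) (hK₁ : 0 ≤ K₁) (hK₂ : 0 ≤ K₂)
    (hb₁ : Real.sqrt 2 * K₁ / R₁ < 1 / 2)
    (hb₂ : (2 : ℝ) ^ ((1 : ℝ) / (2 * (m : ℝ))) * K₂ / R₁ ^ ((1 : ℝ) / (m : ℝ)) <
      (1 - ‖mu‖) * r)
    (F : ℂ × ℂ → ℂ × ℂ)
    (hF₁ : ∀ P ∈ petalW R₁ r, ‖((F P).1 - P.1 - 1)‖ ≤ K₁ / ‖P.1‖)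
    (hF₂ : ∀ P ∈ petalW R₁ r,
      ‖((F P).2 - mu * P.2)‖ ≤ K₂ / ‖P.1‖ ^ ((1 : ℝ) / (m : ℝ))) :
    (∀ X ∈ petalU R₁, R₁ / Real.sqrt 2 < ‖X‖) ∧
    Set.MapsTo F (petalW R₁ r) (petalW R₁ r) ∧
    (∀ P ∈ petalW R₁ r,
      (∀ n : ℕ, P.1.re + (n : ℝ) / 2 ≤ ((F^[n] P).1).re) ∧
      Filter.Tendsto (fun n : ℕ => ‖((F^[n] P).1)‖) Filter.atTop Filter.atTop ∧
      Filter.Tendsto (fun n : ℕ => (F^[n] P).2) Filter.atTop (nhds 0)) := by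
  have hs2 : (0 : ℝ) < Real.sqrt 2 := Real.sqrt_pos.mpr (by norm_num)
  have hs2sq : Real.sqrt 2 ^ 2 = 2 := Real.sq_sqrt (by norm_num)
  have hmR : (0 : ℝ) < (m : ℝ) := by exact_mod_cast Nat.pos_of_ne_zero (by omega)
  have hmpos : (0 : ℝ) < 1 / (m : ℝ) := by positivity
  -- (i)
  have habs : ∀ X ∈ petalU R₁, R₁ / Real.sqrt 2 < ‖X‖ := by
    intro X hX
    have hX' : R₁ < X.re + |X.im| := by
      have : R₁ - X.re < |X.im| := hX
      linarith
    have hnsq : ‖X‖ ^ 2 = X.re * X.re + X.im * X.im := by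
      rw [Complex.sq_norm, Complex.normSq_apply]
    have h1 : X.re + |X.im| ≤ Real.sqrt 2 * ‖X‖ := by
      have hsq : (X.re + |X.im|) ^ 2 ≤ (Real.sqrt 2 * ‖X‖) ^ 2 := by
        rw [mul_pow, hs2sq]
        nlinarith [sq_nonneg (X.re - |X.im|), sq_abs X.im]
      nlinarith [norm_nonneg X, hR₁, hX',
        mul_nonneg hs2.le (norm_nonneg X)]
    rw [div_lt_iff₀ hs2]
    nlinarith
  -- key step
  have hstep : ∀ P ∈ petalW R₁ r, F P ∈ petalW R₁ r ∧ P.1.re + 1 / 2 ≤ (F P).1.re := by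
    intro P hP
    obtain ⟨hPU, hPY⟩ := hP
    have hPY' : ‖P.2‖ < r := by
      simpa [Complex.dist_eq] using (mem_ball.mp hPY)
    have hA : R₁ / Real.sqrt 2 < ‖P.1‖ := habs _ hPU
    have hA0 : (0 : ℝ) < ‖P.1‖ := lt_trans (by positivity) hA
    -- first coordinate
    have hDle : ‖((F P).1 - P.1 - 1)‖ < 1 / 2 := by
      refine lt_of_le_of_lt (hF₁ P ⟨hPU, hPY⟩) ?_
      have h1 : K₁ / ‖P.1‖ ≤ K₁ / (R₁ / Real.sqrt 2) :=
        div_le_div_of_nonneg_left hK₁ (by positivity) hA.le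
      have h2 : K₁ / (R₁ / Real.sqrt 2) = Real.sqrt 2 * K₁ / R₁ := by
        field_simp
      rw [h2] at h1
      linarith
    set D := (F P).1 - P.1 - 1 with hDdef
    have hre : (F P).1.re = P.1.re + 1 + D.re := by
      simp [hDdef, Complex.sub_re, Complex.one_re]
    have him : (F P).1.im = P.1.im + D.im := by
      simp [hDdef, Complex.sub_im, Complex.one_im]
    have hDre : |D.re| ≤ ‖D‖ := Complex.abs_re_le_norm D
    have hDim : |D.im| ≤ ‖D‖ := Complex.abs_im_le_norm D
    have hre2 : P.1.re + 1 / 2 ≤ (F P).1.re := by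
      have := neg_abs_le D.re
      rw [hre]; linarith
    have hUmem : (F P).1 ∈ petalU R₁ := by
      have hPU' : R₁ - P.1.re < |P.1.im| := hPU
      have h1 : |P.1.im| ≤ |P.1.im + D.im| + |D.im| := by
        calc |P.1.im| = |(P.1.im + D.im) + (-D.im)| := by ring_nf
          _ ≤ |P.1.im + D.im| + |(-D.im)| := abs_add_le _ _
          _ = |P.1.im + D.im| + |D.im| := by rw [abs_neg]
      rw [← him] at h1
      show R₁ - (F P).1.re < |(F P).1.im|
      linarith
    -- second coordinate
    have hY : ‖(F P).2‖ < r := by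
      have hbase : (R₁ / Real.sqrt 2) ^ ((1 : ℝ) / (m : ℝ))
          ≤ ‖P.1‖ ^ ((1 : ℝ) / (m : ℝ)) :=
        Real.rpow_le_rpow (by positivity) hA.le hmpos.le
      have hpos1 : (0 : ℝ) < (R₁ / Real.sqrt 2) ^ ((1 : ℝ) / (m : ℝ)) :=
        Real.rpow_pos_of_pos (by positivity) _
      have he1 : K₂ / ‖P.1‖ ^ ((1 : ℝ) / (m : ℝ))
          ≤ K₂ / (R₁ / Real.sqrt 2) ^ ((1 : ℝ) / (m : ℝ)) :=
        div_le_div_of_nonneg_left hK₂ hpos1 hbase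
      have hid : (R₁ / Real.sqrt 2) ^ ((1 : ℝ) / (m : ℝ))
          = R₁ ^ ((1 : ℝ) / (m : ℝ)) / 2 ^ ((1 : ℝ) / (2 * (m : ℝ))) := by
        rw [Real.div_rpow hR₁.le (Real.sqrt_nonneg 2)]
        congr 1
        rw [show Real.sqrt 2 = (2 : ℝ) ^ ((1 : ℝ) / 2) from Real.sqrt_eq_rpow 2,
          ← Real.rpow_mul (by norm_num : (0 : ℝ) ≤ 2)]
        congr 1
        field_simp
      have hid2 : K₂ / ((R₁ : ℝ) ^ ((1 : ℝ) / (m : ℝ)) / 2 ^ ((1 : ℝ) / (2 * (m : ℝ))))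
          = (2 : ℝ) ^ ((1 : ℝ) / (2 * (m : ℝ))) * K₂ / R₁ ^ ((1 : ℝ) / (m : ℝ)) := by
        rw [div_div_eq_mul_div]; ring
      rw [hid, hid2] at he1
      have he2 : K₂ / ‖P.1‖ ^ ((1 : ℝ) / (m : ℝ)) < (1 - ‖mu‖) * r :=
        lt_of_le_of_lt he1 hb₂
      have htri : ‖(F P).2‖
          ≤ ‖mu‖ * ‖P.2‖ + ‖((F P).2 - mu * P.2)‖ := by
        calc ‖(F P).2‖ = ‖(mu * P.2 + ((F P).2 - mu * P.2))‖ := by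
              ring_nf
          _ ≤ ‖mu * P.2‖ + ‖((F P).2 - mu * P.2)‖ :=
              norm_add_le _ _
          _ = ‖mu‖ * ‖P.2‖ + ‖((F P).2 - mu * P.2)‖ := by
              rw [norm_mul]
      have hmur : ‖mu‖ * ‖P.2‖ ≤ ‖mu‖ * r :=
        mul_le_mul_of_nonneg_left hPY'.le (norm_nonneg mu)
      have h2' := hF₂ P ⟨hPU, hPY⟩
      have hexp : ‖mu‖ * r + (1 - ‖mu‖) * r = r := by ring
      linarith
    exact ⟨⟨hUmem, by simpa [mem_ball, Complex.dist_eq] using hY⟩, hre2⟩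
  have hmaps : Set.MapsTo F (petalW R₁ r) (petalW R₁ r) := fun P hP => (hstep P hP).1
  refine ⟨habs, hmaps, ?_⟩
  intro P hP
  have hWn : ∀ n, F^[n] P ∈ petalW R₁ r := by
    intro n
    induction n with
    | zero => simpa using hP
    | succ n ih => rw [Function.iterate_succ_apply']; exact hmaps ih
  have hre : ∀ n : ℕ, P.1.re + (n : ℝ) / 2 ≤ ((F^[n] P).1).re := by
    intro n
    induction n with
    | zero => simp
    | succ n ih =>
      rw [Function.iterate_succ_apply']
      have := (hstep _ (hWn n)).2
      push_cast
      linarith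
  have hXtop : Filter.Tendsto (fun n : ℕ => ‖((F^[n] P).1)‖)
      Filter.atTop Filter.atTop := by
    have hlow : Filter.Tendsto (fun n : ℕ => P.1.re + (n : ℝ) / 2) Filter.atTop
        Filter.atTop := by
      apply tendsto_atTop_add_const_left
      exact Filter.Tendsto.atTop_div_const (by norm_num) tendsto_natCast_atTop_atTop
    apply tendsto_atTop_mono ?_ hlow
    intro n
    exact (hre n).trans (Complex.re_le_norm _)
  refine ⟨hre, hXtop, ?_⟩
  have hY0 : Filter.Tendsto (fun n : ℕ => ‖((F^[n] P).2)‖)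
      Filter.atTop (nhds 0) := by
    apply petal_aux_tendsto (‖mu‖) (norm_nonneg mu) hmu _
      (fun n => K₂ / ‖((F^[n] P).1)‖ ^ ((1 : ℝ) / (m : ℝ)))
      (fun n => norm_nonneg _)
    · intro n
      rw [Function.iterate_succ_apply']
      set Q := F^[n] P
      have h2' := hF₂ Q (hWn n)
      calc ‖(F Q).2‖ = ‖(mu * Q.2 + ((F Q).2 - mu * Q.2))‖ := by
            ring_nf
        _ ≤ ‖mu * Q.2‖ + ‖((F Q).2 - mu * Q.2)‖ :=
            norm_add_le _ _
        _ = ‖mu‖ * ‖Q.2‖ + ‖((F Q).2 - mu * Q.2)‖ := by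
            rw [norm_mul]
        _ ≤ ‖mu‖ * ‖Q.2‖
              + K₂ / ‖Q.1‖ ^ ((1 : ℝ) / (m : ℝ)) := by linarith
    · have hrp : Filter.Tendsto (fun n : ℕ =>
          ‖((F^[n] P).1)‖ ^ ((1 : ℝ) / (m : ℝ))) Filter.atTop Filter.atTop :=
        (tendsto_rpow_atTop hmpos).comp hXtop
      exact Filter.Tendsto.div_atTop tendsto_const_nhds hrp
  rw [tendsto_zero_iff_norm_tendsto_zero]
  simpa using hY0
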